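/- Let N be the complete NBW over Σ = {a, b} with states {q₀, q₁, q₂, q₃}, initial state q₀, accepting states {q₁, q₂}, and transitions δ(q₀,a) = {q₁, q₂}, δ(q₀,b) = {q₃}, δ(q₁,a) = {q₁}, δ(q₁,b) = {q₃}, δ(q₂,a) = {q₃}, δ(q₂,b) = {q₂}, δ(q₃,a) = δ(q₃,b) = {q₃}. Let M be the Markov chain with states {s₀, s₁, s₂}, a single action, labels ℓ(s₀) = ℓ(s₁) = a and ℓ(s₂) = b, and transitions: from s₀ to s₁ with probability 1/3 and to s₂ with probability 2/3; from s₁ to s₁ with probability 1; from s₂ to s₂ with probability 1. Then L(N) = {a^ω, a b^ω}, PSem_N^M(s₀) = 1, PSyn_N^M(s₀) = 2/3, and consequently N is not GFM. -/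

import Mathlib

open scoped Classical ENNReal

/-! ## ω-words -/

/-- Cons a letter onto an ω-word. -/
def wcons {L : Type*} (σ : L) (α : ℕ → L) : ℕ → L
  | 0 => σ
  | n + 1 => α n

/-- Prepend a finite word to an ω-word. -/
def wApp {L : Type*} : List L → (ℕ → L) → (ℕ → L)
  | [], α => α
  | x :: xs, α => wcons x (wApp xs α)

/-- The length-`n` prefix of an ω-word, as a list. -/
def prefList {L : Type*} (α : ℕ → L) (n : ℕ) : List L :=
  List.ofFn (fun i : Fin n => α i)

/-- The starting position of the `i`-th block in an infinite concatenation of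
finite blocks `u 0, u 1, u 2, …`. -/
def blockStart {L : Type*} (u : ℕ → List L) (i : ℕ) : ℕ :=
  ∑ j ∈ Finset.range i, (u j).length

/-- The ω-word `α` is the infinite concatenation of the finite blocks `u 0, u 1, …`. -/
def OmegaConcatOf {L : Type*} (u : ℕ → List L) (α : ℕ → L) : Prop :=
  ∀ (i k : ℕ) (h : k < (u i).length), α (blockStart u i + k) = (u i).get ⟨k, h⟩

/-! ## Nondeterministic Büchi word automata -/

/-- A nondeterministic Büchi word automaton (NBW) with alphabet `L` and state space `Q`:
an initial state, a transition function and a set of accepting (final) states. -/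
structure NBW (L : Type*) (Q : Type*) where
  init : Q
  step : Q → L → Set Q
  acc : Set Q

namespace NBW

variable {L Q : Type*}

/-- An NBW is complete if every state has a successor on every letter. -/
def Complete (N : NBW L Q) : Prop := ∀ q σ, (N.step q σ).Nonempty

/-- `r` is a run of `N` on the ω-word `α` starting in state `q`. -/
def IsRunFrom (N : NBW L Q) (q : Q) (α : ℕ → L) (r : ℕ → Q) : Prop :=
  r 0 = q ∧ ∀ i, r (i + 1) ∈ N.step (r i) (α i)

/-- A run is accepting if some accepting state occurs infinitely often in it. -/
def Accepting (N : NBW L Q) (r : ℕ → Q) : Prop :=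
  ∃ q ∈ N.acc, ∀ n, ∃ m, n ≤ m ∧ r m = q

/-- The ω-language of an NBW: the set of ω-words having an accepting run. -/
def lang (N : NBW L Q) : Set (ℕ → L) :=
  {α | ∃ r, N.IsRunFrom N.init α r ∧ N.Accepting r}

/-- The same NBW with initial state `q` (denoted `C_q` in the paper). -/
def withInit (N : NBW L Q) (q : Q) : NBW L Q := ⟨q, N.step, N.acc⟩

end NBW

/-! ## NFAs on finite words -/

/-- A nondeterministic finite automaton with a single initial state. -/
structure NFAo (L : Type*) (Q : Type*) where
  init : Q
  step : Q → L → Set Q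
  acc : Set Q

namespace NFAo

variable {L Q : Type*}

/-- An NFA is complete if every state has a successor on every letter. -/
def Complete (M : NFAo L Q) : Prop := ∀ q σ, (M.step q σ).Nonempty

/-- The set of states reachable from a set of states on a finite word. -/
def evalFrom (M : NFAo L Q) (S : Set Q) (w : List L) : Set Q :=
  w.foldl (fun S σ => ⋃ q ∈ S, M.step q σ) S

/-- The language of an NFA: finite words having a run from the initial state ending
in an accepting state. -/
def lang (M : NFAo L Q) : Set (List L) :=
  {w | ∃ q ∈ M.evalFrom {M.init} w, q ∈ M.acc}

/-! ### The `A_f` construction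
The fresh letter `$` is modelled by `none : Option L` and the fresh state `f`
by `none : Option Q`. -/

/-- Transitions of `A_f` out of an original state `q`. -/
def dollarStepAux (M : NFAo L Q) (q : Q) : Option L → Set (Option Q)
  | some σ => some '' M.step q σ
  | none => if q ∈ M.acc then {none} else {some M.init}

/-- The transition function of `A_f`: on the fresh state `f` it behaves like the
initial state. -/
def dollarStep (M : NFAo L Q) : Option Q → Option L → Set (Option Q)
  | some q, σ => M.dollarStepAux q σ
  | none, σ => M.dollarStepAux M.init σ

/-- The Büchi automaton `A_f` obtained from the complete NFA `A` by adding the fresh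
letter `$ = none` and the fresh accepting state `f = none`. -/
def dollar (M : NFAo L Q) : NBW (Option L) (Option Q) :=
  ⟨some M.init, M.dollarStep, {none}⟩

end NFAo

/-- The one-state complete NFA over `L` whose single state is both initial and
accepting; its language is all of `L*`. -/
def unitNFA (L : Type*) : NFAo L Unit := ⟨(), fun _ _ => {()}, Set.univ⟩

/-! ## The fork construction -/

/-- The state space of `fork(A_f)`: the states of `A_f` (where `af none` is the state `f`),
the states `b0 = q₀'` and `bf = f'` of `B_f` (for the one-state universal NFA `B`),
and the three fresh states `q_F`, `q_A`, `q_B`. -/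
inductive ForkState (Q : Type*) where
  | af : Option Q → ForkState Q
  | b0 : ForkState Q
  | bf : ForkState Q
  | qF : ForkState Q
  | qA : ForkState Q
  | qB : ForkState Q
  deriving DecidableEq, Fintype

/-- The transition function of `fork(A_f)`. -/
def forkStep {L Q : Type*} (M : NFAo L Q) :
    ForkState Q → Option L → Set (ForkState Q)
  | .af q, σ => ForkState.af '' M.dollarStep q σ
  | .b0, some _ => {.b0}
  | .b0, none => {.bf}
  | .bf, some _ => {.b0}
  | .bf, none => {.bf}
  | .qF, _ => {.qA, .qB}
  | .qA, _ => {.af (some M.init)}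
  | .qB, some _ => ∅
  | .qB, none => {.b0}

/-- The NBW `fork(A_f)` of the paper (for the complete NFA `A = M`). -/
def fork {L Q : Type*} (M : NFAo L Q) : NBW (Option L) (ForkState Q) :=
  ⟨.qF, forkStep M, {.af none, .bf}⟩

/-! ## Markov decision processes -/

/-- A state-labelled Markov decision process with states `S`, actions `A` and labels `L`:
a partial probabilistic transition function and a labelling of states. -/
structure MDP (S A L : Type*) where
  prob : S → A → Option (PMF S)
  label : S → L

namespace MDP

variable {S A L : Type*}

/-- The action `a` is available (enabled) in state `s`. -/
def enabled (M : MDP S A L) (s : S) (a : A) : Prop := (M.prob s a).isSome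

/-- Every state has at least one available action (assumed for all MDPs). -/
def NonBlocking (M : MDP S A L) : Prop := ∀ s, ∃ a, M.enabled s a

/-- An MDP is a Markov chain if every state has exactly one available action. -/
def IsMC (M : MDP S A L) : Prop := ∀ s, ∃! a, M.enabled s a

/-- A strategy: given a finite run (the past state-action pairs and the current state),
a distribution over the actions available at the current state. -/
structure Strategy (M : MDP S A L) where
  act : List (S × A) → S → PMF A
  supp : ∀ h s, (∃ a, M.enabled s a) → ∀ a ∈ (act h s).support, M.enabled s a

/-- The probability that, starting from `s` with past history `hist`, the MDP controlled
by the strategy `μ` produces exactly the finite run `l` (a list of state-action pairs). -/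
noncomputable def pathWeightAux (M : MDP S A L) (μ : M.Strategy) :
    List (S × A) → S → List (S × A) → ℝ≥0∞
  | _, _, [] => 1
  | hist, s, (s', a) :: rest =>
    if s' = s then
      μ.act hist s a *
        match rest with
        | [] => 1
        | (s'', _) :: _ =>
          (match M.prob s a with
           | none => 0
           | some p => p s'') * pathWeightAux M μ (hist ++ [(s, a)]) s'' rest
    else 0

/-- `E` is a cylinder set at horizon `n`: membership only depends on the first `n`
state-action pairs of a run. -/
def IsCylinderAt {X : Type*} (E : Set (ℕ → X)) (n : ℕ) : Prop :=
  ∀ r r' : ℕ → X, prefList r n = prefList r' n → r ∈ E → r' ∈ E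

/-- The probability of the horizon-`n` cylinder set `E` of runs, starting from `s₀`,
under strategy `μ`. -/
noncomputable def horizonProb [Fintype S] [Fintype A] (M : MDP S A L) (μ : M.Strategy)
    (s₀ : S) (n : ℕ) (E : Set (ℕ → S × A)) : ℝ≥0∞ :=
  ∑ v : Fin n → S × A,
    if ∃ r ∈ E, prefList r n = List.ofFn v then pathWeightAux M μ [] s₀ (List.ofFn v)
    else 0

/-- The cylinder premeasure: defined on cylinder sets via finite-horizon probabilities
(and `∞` on non-cylinder sets). -/
noncomputable def preMeasure [Fintype S] [Fintype A] (M : MDP S A L) (μ : M.Strategy)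
    (s₀ : S) (E : Set (ℕ → S × A)) : ℝ≥0∞ :=
  ⨅ (n : ℕ) (_ : IsCylinderAt E n), horizonProb M μ s₀ n E

theorem preMeasure_empty [Fintype S] [Fintype A] (M : MDP S A L) (μ : M.Strategy)
    (s₀ : S) : preMeasure M μ s₀ ∅ = 0 := by
  refine le_antisymm ?_ (zero_le)
  have hcyl : IsCylinderAt (∅ : Set (ℕ → S × A)) 0 := fun r r' _ h => h.elim
  calc preMeasure M μ s₀ ∅ ≤ horizonProb M μ s₀ 0 ∅ := iInf₂_le 0 hcyl
    _ = 0 := by simp [horizonProb]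

/-- The standard probability measure `Pr^μ_{s₀}` on the space of infinite runs
(as the Carathéodory outer measure extending the cylinder premeasure). -/
noncomputable def Pr [Fintype S] [Fintype A] (M : MDP S A L) (μ : M.Strategy) (s₀ : S) :
    MeasureTheory.OuterMeasure (ℕ → S × A) :=
  MeasureTheory.OuterMeasure.ofFunction (preMeasure M μ s₀) (preMeasure_empty M μ s₀)

/-- The product MDP `M × N` of an MDP and an NBW. -/
noncomputable def prod {Q : Type*} (M : MDP S A L) (N : NBW L Q) : MDP (S × Q) (A × Q) L where
  prob := fun sq aq =>
    if aq.2 ∈ N.step sq.2 (M.label sq.1) then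
      (M.prob sq.1 aq.1).map (PMF.map fun s' => (s', aq.2))
    else none
  label := fun sq => M.label sq.1

end MDP

/-- The semantic satisfaction probability `PSem_N^M(s₀)`: the optimal probability that
the label sequence of a run of `M` from `s₀` is in the language of `N`. -/
noncomputable def PSem {S A L Q : Type*} [Fintype S] [Fintype A] (N : NBW L Q)
    (M : MDP S A L) (s₀ : S) : ℝ≥0∞ :=
  ⨆ μ : M.Strategy, MDP.Pr M μ s₀ {r | (fun n => M.label (r n).1) ∈ N.lang}

/-- The syntactic satisfaction probability `PSyn_N^M(s₀)`: the optimal probability that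
a run of the product MDP `M × N` from `(s₀, q₀)` visits `F^× = S × F` infinitely often. -/
noncomputable def PSyn {S A L Q : Type*} [Fintype S] [Fintype A] [Fintype Q] (N : NBW L Q)
    (M : MDP S A L) (s₀ : S) : ℝ≥0∞ :=
  ⨆ μ : (M.prod N).Strategy,
    MDP.Pr (M.prod N) μ (s₀, N.init) {r | ∀ n, ∃ m, n ≤ m ∧ (r m).1.2 ∈ N.acc}

namespace NBW

/-- An NBW is good-for-MDPs (GFM) if syntactic and semantic satisfaction probabilities
coincide for every finite MDP and every initial state. -/
def GFM {L Q : Type*} [Fintype Q] (N : NBW L Q) : Prop :=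
  ∀ (S A : Type) [Fintype S] [Fintype A] (M : MDP S A L),
    M.NonBlocking → ∀ s₀ : S, PSyn N M s₀ = PSem N M s₀

/-- An NBW is qualitatively good-for-MDPs (QGFM) if, whenever the semantic satisfaction
probability is 1, so is the syntactic one, for every finite MDP and initial state. -/
def QGFM {L Q : Type*} [Fintype Q] (N : NBW L Q) : Prop :=
  ∀ (S A : Type) [Fintype S] [Fintype A] (M : MDP S A L),
    M.NonBlocking → ∀ s₀ : S, PSem N M s₀ = 1 → PSyn N M s₀ = 1

end NBW

/-! ## Safety automata -/

/-- A safety automaton: an automaton in which every state is accepting, so only the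
initial state and the transitions matter. -/
structure SafetyAut (L Q : Type*) where
  init : Q
  step : Q → L → Set Q

/-- The language of a safety automaton: the ω-words on which it has an infinite run. -/
def SafetyAut.lang {L Q : Type*} (T : SafetyAut L Q) : Set (ℕ → L) :=
  {α | ∃ r : ℕ → Q, r 0 = T.init ∧ ∀ i, r (i + 1) ∈ T.step (r i) (α i)}

/-- A safety automaton is good-for-games (GFG) if its nondeterminism can be resolved
based only on the history: a strategy `g` picks, for each finite word, a current state,
following a transition on every finite word that is a prefix of a word of the language. -/
def SafetyAut.GFG {L Q : Type*} (T : SafetyAut L Q) : Prop :=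
  ∃ g : List L → Q, g [] = T.init ∧
    ∀ (w : List L) (σ : L),
      (∃ α ∈ T.lang, prefList α (w.length + 1) = w ++ [σ]) →
      g (w ++ [σ]) ∈ T.step (g w) σ

namespace NBW

variable {L Q : Type*}

/-- A state `q` of `C` is productive if `L(C_q) ≠ ∅`. -/
def Productive (C : NBW L Q) (q : Q) : Prop := (C.withInit q).lang.Nonempty

/-- A state `q` of `C` is a QGFM state if `C_q` is QGFM. -/
def QGFMState [Fintype Q] (C : NBW L Q) (q : Q) : Prop := (C.withInit q).QGFM

/-- A transition `(q, σ, r)` of `C` is residual if `L(C_r) = σ⁻¹ L(C_q)`. -/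
def ResidualTrans (C : NBW L Q) (q : Q) (σ : L) (r : Q) : Prop :=
  r ∈ C.step q σ ∧ (C.withInit r).lang = {α | wcons σ α ∈ (C.withInit q).lang}

/-- The safety automaton `S` associated with the candidate NBW `C`: its states are the
productive QGFM states of `C` and its transitions are the residual transitions of `C`
between such states. -/
def safetyS [Fintype Q] (C : NBW L Q) : SafetyAut L Q :=
  ⟨C.init, fun q σ =>
    {r | (C.Productive q ∧ C.QGFMState q) ∧ (C.Productive r ∧ C.QGFMState r) ∧
      C.ResidualTrans q σ r}⟩

/-- The safety automaton `T` associated with the candidate NBW `C`: its states are the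
productive states of `C` and its transitions are all transitions of `C` between them. -/
def safetyT (C : NBW L Q) : SafetyAut L Q :=
  ⟨C.init, fun q σ => {r | C.Productive q ∧ C.Productive r ∧ r ∈ C.step q σ}⟩

end NBW
/-- The NBW of Figure 1, over `Σ = {a, b}` modelled as `Bool` with `a = true`,
`b = false`; states `q₀,…,q₃` modelled as `Fin 4`. -/
def exNBW : NBW Bool (Fin 4) where
  init := 0
  step := fun q σ =>
    if q = 0 then (if σ = true then {1, 2} else {3})
    else if q = 1 then (if σ = true then {1} else {3})
    else if q = 2 then (if σ = true then {3} else {2})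
    else {3}
  acc := {1, 2}

/-- The distribution of the Markov chain of Figure 2(a) from `s₀`: to `s₁` with
probability `1/3` and to `s₂` with probability `2/3`. -/
noncomputable def exPMF : PMF (Fin 3) :=
  PMF.ofFintype ![0, 1/3, 2/3] (by
    simp only [Fin.sum_univ_three, Matrix.cons_val_zero, Matrix.cons_val_one,
      Matrix.head_cons, Matrix.cons_val_two, Matrix.tail_cons, zero_add,
      ENNReal.div_add_div_same]
    norm_num
    exact ENNReal.div_self (by norm_num) (by norm_num))

/-- The Markov chain of Figure 2(a): states `s₀,s₁,s₂` modelled as `Fin 3`, one action,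
labels `ℓ(s₀) = ℓ(s₁) = a = true`, `ℓ(s₂) = b = false`. -/
noncomputable def exMC : MDP (Fin 3) Unit Bool where
  prob := fun s _ =>
    some (if s = 0 then exPMF else if s = 1 then PMF.pure 1 else PMF.pure 2)
  label := fun s => if s = 2 then false else true

section Test
variable {S A L : Type*}

@[simp] lemma pwa_nil (M : MDP S A L) (μ : M.Strategy) (h : List (S × A)) (s : S) :
    M.pathWeightAux μ h s [] = 1 := rfl

lemma pwa_single (M : MDP S A L) (μ : M.Strategy) (h : List (S × A)) (s : S) (a : A) :
    M.pathWeightAux μ h s [(s, a)] = μ.act h s a := by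
  simp [MDP.pathWeightAux]

lemma pwa_cons_cons (M : MDP S A L) (μ : M.Strategy) (h : List (S × A)) (s : S) (a : A)
    (s'' : S) (b : A) (l : List (S × A)) :
    M.pathWeightAux μ h s ((s, a) :: (s'', b) :: l) =
      μ.act h s a * ((match M.prob s a with | none => 0 | some p => p s'') *
        M.pathWeightAux μ (h ++ [(s, a)]) s'' ((s'', b) :: l)) := by
  simp [MDP.pathWeightAux]

lemma pwa_cons_ne (M : MDP S A L) (μ : M.Strategy) (h : List (S × A)) (s s' : S) (a : A)
    (l : List (S × A)) (hne : s' ≠ s) :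
    M.pathWeightAux μ h s ((s', a) :: l) = 0 := by
  simp [MDP.pathWeightAux, hne]

example (m : Set (ℕ → ℕ) → ℝ≥0∞) (h : m ∅ = 0) (s : Set (ℕ → ℕ)) :
    MeasureTheory.OuterMeasure.ofFunction m h s =
      ⨅ (t : ℕ → Set (ℕ → ℕ)) (_ : s ⊆ ⋃ i, t i), ∑' n, m (t n) :=
  MeasureTheory.OuterMeasure.ofFunction_apply m h s

example (p : PMF Unit) : p () = 1 := by
  have := p.tsum_coe
  rwa [tsum_eq_single ()] at this
  intro b hb; cases b; simp at hb

example : exPMF 0 = 0 ∧ exPMF 1 = 1/3 ∧ exPMF 2 = 2/3 := by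
  refine ⟨?_, ?_, ?_⟩ <;> simp [exPMF]

example (v v' : Fin 2 → ℕ) (h : List.ofFn v = List.ofFn v') : v = v' := by
  rwa [List.ofFn_inj] at h

end Test
lemma step_mem {q q' : Fin 4} {σ : Bool} (h : q' ∈ exNBW.step q σ) :
    (q = 0 ∧ σ = true ∧ (q' = 1 ∨ q' = 2)) ∨ (q = 0 ∧ σ = false ∧ q' = 3) ∨
    (q = 1 ∧ σ = true ∧ q' = 1) ∨ (q = 1 ∧ σ = false ∧ q' = 3) ∨
    (q = 2 ∧ σ = true ∧ q' = 3) ∨ (q = 2 ∧ σ = false ∧ q' = 2) ∨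
    (q = 3 ∧ q' = 3) := by
  fin_cases q <;> cases σ <;> simp_all [exNBW]

lemma step3 {σ : Bool} : exNBW.step 3 σ = {3} := by
  simp [exNBW]

lemma exNBW_lang : exNBW.lang = {(fun _ => true), wcons true (fun _ => false)} := by
  ext α
  constructor
  · rintro ⟨r, ⟨hr0, hstep⟩, q, hq, hinf⟩
    -- q ∈ {1,2}; r never equals 3
    have habs : ∀ i, r i = 3 → ∀ m, i ≤ m → r m = 3 := by
      intro i hi m him
      induction m with
      | zero =>
        have hz : i = 0 := by omega
        subst hz; exact hi
      | succ k ih =>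
        rcases Nat.lt_or_ge i (k+1) with hlt | hge
        · have hk : r k = 3 := ih (by omega)
          have := hstep k
          rw [hk, step3] at this
          simpa using this
        · have : i = k + 1 := by omega
          rw [← this]; exact hi
    have hno3 : ∀ i, r i ≠ 3 := by
      intro i hi
      obtain ⟨m, him, hm⟩ := hinf i
      have : r m = 3 := habs i hi m him
      rw [hm] at this
      have hq' : q = 1 ∨ q = 2 := by simpa [exNBW] using hq
      rcases hq' with h | h <;> simp [h] at this
    have hα0 : α 0 = true := by
      by_contra hb
      have hb' : α 0 = false := by simpa using hb
      have := hstep 0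
      rw [hr0, hb'] at this
      have : r 1 = 3 := by simpa [exNBW] using this
      exact hno3 1 this
    have hr1 : r 1 = 1 ∨ r 1 = 2 := by
      have := hstep 0
      rw [hr0, hα0] at this
      simpa [exNBW] using this
    rcases hr1 with h1 | h1
    · -- stays at 1, α all true
      left
      have key : ∀ i, r (i+1) = 1 ∧ α i = true := by
        intro i
        induction i with
        | zero =>
          refine ⟨h1, hα0⟩
        | succ k ih =>
          have hk := ih.1
          have := hstep (k+1)
          rw [hk] at this
          cases hc : α (k+1)
          · rw [hc] at this
            exact absurd (by simpa [exNBW] using this) (hno3 (k+2))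
          · rw [hc] at this
            exact ⟨by simpa [exNBW] using this, rfl⟩
      funext n
      cases n with
      | zero => exact hα0
      | succ k => exact (key (k+1)).2
    · right
      have key : ∀ i, r (i+1) = 2 ∧ (i ≥ 1 → α i = false) := by
        intro i
        induction i with
        | zero => exact ⟨h1, by omega⟩
        | succ k ih =>
          have hk := ih.1
          have := hstep (k+1)
          rw [hk] at this
          cases hc : α (k+1)
          · rw [hc] at this
            exact ⟨by simpa [exNBW] using this, fun _ => rfl⟩
          · rw [hc] at this
            exact absurd (by simpa [exNBW] using this) (hno3 (k+2))
      funext n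
      cases n with
      | zero => exact hα0
      | succ k =>
        show α (k+1) = false
        exact (key (k+1)).2 (by omega)
  · rintro (h | h) <;> subst h
    · exact ⟨wcons 0 (fun _ => 1), ⟨rfl, by
        intro i; cases i <;> simp [wcons, exNBW]⟩, 1, by simp [exNBW], fun n =>
        ⟨n + 1, by omega, rfl⟩⟩
    · exact ⟨wcons 0 (fun _ => 2), ⟨rfl, by
        intro i; cases i <;> simp [wcons, exNBW]⟩, 2, by simp [exNBW], fun n =>
        ⟨n + 1, by omega, rfl⟩⟩
section General
variable {S A L : Type*}

/-- Positive-probability step. -/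
def PosStep (M : MDP S A L) (s : S) (a : A) (t : S) : Prop :=
  ∃ p, M.prob s a = some p ∧ p t ≠ 0

/-- Structurally valid finite path prefixes. -/
def ValidFrom (M : MDP S A L) : S → List (S × A) → Prop
  | _, [] => True
  | s, (s', a) :: rest => s' = s ∧ M.enabled s a ∧
      (match rest with
       | [] => True
       | (s'', _) :: _ => PosStep M s a s'' ∧ ValidFrom M s'' rest)

lemma validFrom_nil (M : MDP S A L) (s : S) : ValidFrom M s [] := trivial

lemma validFrom_cons_iff (M : MDP S A L) (s : S) (x : S × A) (rest : List (S × A)) :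
    ValidFrom M s (x :: rest) ↔ x.1 = s ∧ M.enabled s x.2 ∧
      (match rest with
       | [] => True
       | (s'', _) :: _ => PosStep M s x.2 s'' ∧ ValidFrom M s'' rest) := by
  obtain ⟨s', a⟩ := x
  rfl

lemma pwa_ne_zero_valid (M : MDP S A L) (hNB : M.NonBlocking) (μ : M.Strategy) :
    ∀ (l h : List (S × A)) (s : S), M.pathWeightAux μ h s l ≠ 0 → ValidFrom M s l := by
  intro l
  induction l with
  | nil => intro h s _; trivial
  | cons x rest ih =>
    obtain ⟨s', a⟩ := x
    intro h s hw
    by_cases hss : s' = s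
    · subst hss
      cases rest with
      | nil =>
        rw [pwa_single] at hw
        have hen : M.enabled s' a := μ.supp h s' (hNB s') a (by
          rwa [PMF.mem_support_iff])
        exact ⟨rfl, hen, trivial⟩
      | cons y l₂ =>
        obtain ⟨s'', b⟩ := y
        rw [pwa_cons_cons] at hw
        have h1 : (μ.act h s' a : ℝ≥0∞) ≠ 0 := fun hz => hw (by rw [hz, zero_mul])
        have h2 : (match M.prob s' a with | none => 0 | some p => p s'') *
            M.pathWeightAux μ (h ++ [(s', a)]) s'' ((s'', b) :: l₂) ≠ 0 :=
          fun hz => hw (by rw [hz, mul_zero])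
        rw [mul_ne_zero_iff] at h2
        have hen : M.enabled s' a := μ.supp h s' (hNB s') a (by rwa [PMF.mem_support_iff])
        refine ⟨rfl, hen, ?_, ih _ _ h2.2⟩
        cases hp : M.prob s' a with
        | none => rw [hp] at h2; exact absurd rfl h2.1
        | some p => exact ⟨p, hp, by rw [hp] at h2; exact h2.1⟩
    · rw [pwa_cons_ne _ _ _ _ _ _ _ hss] at hw
      exact absurd rfl hw

lemma vf_head {M : MDP S A L} {s : S} {x : S × A} {l : List (S × A)}
    (h : ValidFrom M s (x :: l)) : x.1 = s :=
  ((validFrom_cons_iff M s x l).mp h).1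

lemma vf_en {M : MDP S A L} {s : S} {x : S × A} {l : List (S × A)}
    (h : ValidFrom M s (x :: l)) : M.enabled s x.2 :=
  ((validFrom_cons_iff M s x l).mp h).2.1

lemma vf_tail {M : MDP S A L} {s : S} {x y : S × A} {l : List (S × A)}
    (h : ValidFrom M s (x :: y :: l)) :
    PosStep M s x.2 y.1 ∧ ValidFrom M y.1 (y :: l) := by
  have h' := ((validFrom_cons_iff M s x (y :: l)).mp h).2.2
  obtain ⟨s'', b⟩ := y
  obtain ⟨hp, hv⟩ := h'
  exact ⟨hp, hv⟩

lemma vf_suffix {M : MDP S A L} :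
    ∀ (l₁ : List (S × A)) {s : S} {y : S × A} {l₂ : List (S × A)},
      ValidFrom M s (l₁ ++ y :: l₂) → ValidFrom M y.1 (y :: l₂) := by
  intro l₁
  induction l₁ with
  | nil =>
    intro s y l₂ h
    rw [List.nil_append] at h
    rw [vf_head h]
    exact h
  | cons x l₁t ih =>
    intro s y l₂ h
    rw [List.cons_append] at h
    cases l₁t with
    | nil =>
      rw [List.nil_append] at h
      exact (vf_tail h).2
    | cons w l₁t' =>
      rw [List.cons_append] at h
      exact ih (vf_tail h).2

end General
section Measure
variable {S A L : Type*} [Fintype S] [Fintype A]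

lemma prefList_ofFn {X : Type*} (r : ℕ → X) (n : ℕ) :
    prefList r n = List.ofFn (fun i : Fin n => r i) := rfl

lemma single_le_horizon (M : MDP S A L) (μ : M.Strategy) (s₀ : S) (n : ℕ)
    (E : Set (ℕ → S × A)) (r : ℕ → S × A) (hr : r ∈ E) :
    M.pathWeightAux μ [] s₀ (prefList r n) ≤ M.horizonProb μ s₀ n E := by
  rw [MDP.horizonProb]
  have hterm : M.pathWeightAux μ [] s₀ (prefList r n) =
      (if ∃ r' ∈ E, prefList r' n = List.ofFn (fun i : Fin n => r i) then
        M.pathWeightAux μ [] s₀ (List.ofFn (fun i : Fin n => r i)) else 0) := by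
    rw [if_pos ⟨r, hr, rfl⟩]; rfl
  refine le_trans (le_of_eq hterm) ?_
  exact Finset.single_le_sum
    (f := fun v : Fin n → S × A =>
      if ∃ r' ∈ E, prefList r' n = List.ofFn v then
        M.pathWeightAux μ [] s₀ (List.ofFn v) else 0)
    (fun v _ => zero_le) (Finset.mem_univ _)

lemma horizon_prefCyl_le (M : MDP S A L) (μ : M.Strategy) (s₀ : S) (n : ℕ)
    (r : ℕ → S × A) :
    M.horizonProb μ s₀ n {r' | prefList r' n = prefList r n} ≤
      M.pathWeightAux μ [] s₀ (prefList r n) := by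
  rw [MDP.horizonProb]
  calc ∑ v : Fin n → S × A,
      (if ∃ r' ∈ {r' | prefList r' n = prefList r n}, prefList r' n = List.ofFn v then
        M.pathWeightAux μ [] s₀ (List.ofFn v) else 0)
      ≤ ∑ v : Fin n → S × A,
        (if v = (fun i : Fin n => r i) then M.pathWeightAux μ [] s₀ (prefList r n) else 0) := by
        refine Finset.sum_le_sum fun v _ => ?_
        split_ifs with h1 h2
        · exact le_of_eq (by rw [h2]; rfl)
        · exfalso
          obtain ⟨r', hr', hpre⟩ := h1
          apply h2
          rw [← List.ofFn_inj.mp (hpre.symm.trans hr')]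
        · exact zero_le
        · exact le_refl _
      _ = M.pathWeightAux μ [] s₀ (prefList r n) := by
        rw [Finset.sum_ite_eq' Finset.univ]
        simp
  
lemma isCylinder_prefCyl {X : Type*} (r : ℕ → X) (n : ℕ) :
    MDP.IsCylinderAt {r' | prefList r' n = prefList r n} n := by
  intro a b hab ha
  exact Set.mem_setOf.mpr (hab ▸ ha)

lemma preMeasure_le_horizon (M : MDP S A L) (μ : M.Strategy) (s₀ : S) (n : ℕ)
    (E : Set (ℕ → S × A)) (hcyl : MDP.IsCylinderAt E n) :
    M.preMeasure μ s₀ E ≤ M.horizonProb μ s₀ n E :=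
  iInf₂_le n hcyl

lemma le_preMeasure (M : MDP S A L) (μ : M.Strategy) (s₀ : S) (c : ℝ≥0∞)
    (E : Set (ℕ → S × A))
    (h : ∀ n, MDP.IsCylinderAt E n → c ≤ M.horizonProb μ s₀ n E) :
    c ≤ M.preMeasure μ s₀ E :=
  le_iInf₂ h

lemma Pr_le_cover (M : MDP S A L) (μ : M.Strategy) (s₀ : S) (E : Set (ℕ → S × A))
    (g : ℕ → Set (ℕ → S × A)) (hcov : E ⊆ ⋃ i, g i) :
    M.Pr μ s₀ E ≤ ∑' i, M.preMeasure μ s₀ (g i) := by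
  rw [MDP.Pr, MeasureTheory.OuterMeasure.ofFunction_apply]
  exact iInf₂_le g hcov

lemma le_Pr (M : MDP S A L) (μ : M.Strategy) (s₀ : S) (c : ℝ≥0∞) (E : Set (ℕ → S × A))
    (h : ∀ g : ℕ → Set (ℕ → S × A), E ⊆ ⋃ i, g i → c ≤ ∑' i, M.preMeasure μ s₀ (g i)) :
    c ≤ M.Pr μ s₀ E := by
  rw [MDP.Pr, MeasureTheory.OuterMeasure.ofFunction_apply]
  exact le_iInf₂ h

lemma Pr_le_one (M : MDP S A L) (μ : M.Strategy) (s₀ : S) (E : Set (ℕ → S × A)) :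
    M.Pr μ s₀ E ≤ 1 := by
  have h1 : M.Pr μ s₀ E ≤ M.preMeasure μ s₀ Set.univ :=
    le_trans ((M.Pr μ s₀).mono (Set.subset_univ E))
      (MeasureTheory.OuterMeasure.ofFunction_le _)
  refine le_trans h1 ?_
  refine le_trans (preMeasure_le_horizon M μ s₀ 0 _ (fun a b _ h => trivial)) ?_
  rw [MDP.horizonProb]
  have hb : ∀ v : Fin 0 → S × A,
      (if ∃ r ∈ Set.univ, prefList r 0 = List.ofFn v then
        M.pathWeightAux μ [] s₀ (List.ofFn v) else 0) ≤ (1 : ℝ≥0∞) := by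
    intro v
    split_ifs
    · rw [List.ofFn_zero, pwa_nil]
    · exact zero_le
  calc ∑ v : Fin 0 → S × A,
      (if ∃ r ∈ Set.univ, prefList r 0 = List.ofFn v then
        M.pathWeightAux μ [] s₀ (List.ofFn v) else 0)
      ≤ ∑ _v : Fin 0 → S × A, (1 : ℝ≥0∞) := Finset.sum_le_sum fun v _ => hb v
    _ = 1 := by simp

end Measure
section Concrete

noncomputable abbrev pM : MDP (Fin 3 × Fin 4) (Unit × Fin 4) Bool := exMC.prod exNBW

lemma pwa_cons_cons' {S A L : Type*} (M : MDP S A L) (μ : M.Strategy) (h : List (S × A))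
    (s : S) (a : A) (s'' : S) (b : A) (l : List (S × A)) :
    M.pathWeightAux μ h s ((s, a) :: (s'', b) :: l) =
      μ.act h s a * ((M.prob s a).elim 0 (fun p => p s'') *
        M.pathWeightAux μ (h ++ [(s, a)]) s'' ((s'', b) :: l)) := by
  rw [pwa_cons_cons]
  cases hp : M.prob s a <;> rfl

/-- The base PMF of `exMC` at state `s`. -/
noncomputable def basePMF (s : Fin 3) : PMF (Fin 3) :=
  if s = 0 then exPMF else if s = 1 then PMF.pure 1 else PMF.pure 2

lemma exMC_prob (s : Fin 3) : exMC.prob s () = some (basePMF s) := rfl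

lemma pM_prob (s : Fin 3) (q : Fin 4) (u : Unit) (q' : Fin 4) :
    pM.prob (s, q) (u, q') =
      if q' ∈ exNBW.step q (exMC.label s) then
        some ((basePMF s).map (fun s' => (s', q'))) else none := by
  show (if q' ∈ exNBW.step q (exMC.label s) then _ else none) = _
  split_ifs with h
  · rfl
  · rfl

lemma pM_enabled (s : Fin 3) (q : Fin 4) (u : Unit) (q' : Fin 4) :
    pM.enabled (s, q) (u, q') ↔ q' ∈ exNBW.step q (exMC.label s) := by
  rw [MDP.enabled, pM_prob]
  split_ifs with h <;> simp [h]

lemma exNBW_complete : exNBW.Complete := by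
  intro q σ
  simp only [exNBW]
  split_ifs
  · exact ⟨1, Or.inl rfl⟩
  · exact ⟨3, rfl⟩
  · exact ⟨1, rfl⟩
  · exact ⟨3, rfl⟩
  · exact ⟨3, rfl⟩
  · exact ⟨2, rfl⟩
  · exact ⟨3, rfl⟩

lemma pM_nonblocking : pM.NonBlocking := by
  rintro ⟨s, q⟩
  obtain ⟨q', hq'⟩ := exNBW_complete q (exMC.label s)
  exact ⟨((), q'), (pM_enabled s q () q').mpr hq'⟩

lemma map_pair_apply (p : PMF (Fin 3)) (q' : Fin 4) (t : Fin 3) (c : Fin 4) :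
    (p.map (fun s' => (s', q'))) (t, c) = if c = q' then p t else 0 := by
  rw [PMF.map_apply]
  split_ifs with h
  · subst h
    rw [tsum_eq_single t]
    · simp
    · intro b hb
      simp [Prod.ext_iff, Ne.symm hb]
  · refine ENNReal.tsum_eq_zero.mpr fun a => ?_
    simp [Prod.ext_iff, h]

lemma act_two_le (p : PMF (Unit × Fin 4)) : p ((), 1) + p ((), 2) ≤ 1 := by
  have h := p.tsum_coe
  rw [← h]
  refine le_trans (le_of_eq (Finset.sum_pair (by decide)).symm) (ENNReal.sum_le_tsum _)

/-- The two accepting runs of the product. -/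
def run1 : ℕ → (Fin 3 × Fin 4) × (Unit × Fin 4) :=
  fun n => if n = 0 then ((0, 0), ((), 1)) else ((1, 1), ((), 1))

def run2 : ℕ → (Fin 3 × Fin 4) × (Unit × Fin 4) :=
  fun n => if n = 0 then ((0, 0), ((), 2)) else ((2, 2), ((), 2))

lemma pref_run1 (n : ℕ) :
    prefList run1 (n + 1) = ((0, 0), ((), 1)) :: List.replicate n (((1, 1) : Fin 3 × Fin 4), ((), (1 : Fin 4))) := by
  rw [prefList, List.ofFn_succ]
  congr 1
  have : (fun i : Fin n => run1 (i.succ : ℕ)) = fun _ : Fin n => (((1, 1) : Fin 3 × Fin 4), ((), (1 : Fin 4))) := by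
    funext i
    simp [run1, Fin.val_succ]
  rw [this, List.ofFn_const]

lemma pref_run2 (n : ℕ) :
    prefList run2 (n + 1) = ((0, 0), ((), 2)) :: List.replicate n (((2, 2) : Fin 3 × Fin 4), ((), (2 : Fin 4))) := by
  rw [prefList, List.ofFn_succ]
  congr 1
  have : (fun i : Fin n => run2 (i.succ : ℕ)) = fun _ : Fin n => (((2, 2) : Fin 3 × Fin 4), ((), (2 : Fin 4))) := by
    funext i
    simp [run2, Fin.val_succ]
  rw [this, List.ofFn_const]

lemma basePMF_one : basePMF 1 = PMF.pure 1 := by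
  simp [basePMF, show (1 : Fin 3) ≠ 0 by decide]
lemma basePMF_two : basePMF 2 = PMF.pure 2 := by
  simp [basePMF, show (2 : Fin 3) ≠ 0 by decide, show (2 : Fin 3) ≠ 1 by decide]
lemma basePMF_zero : basePMF 0 = exPMF := by simp [basePMF]

lemma mem_step_01 : (1 : Fin 4) ∈ exNBW.step 0 (exMC.label 0) := by simp [exNBW, exMC]
lemma mem_step_02 : (2 : Fin 4) ∈ exNBW.step 0 (exMC.label 0) := by simp [exNBW, exMC]
lemma mem_step_11 : (1 : Fin 4) ∈ exNBW.step 1 (exMC.label 1) := by simp [exNBW, exMC]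
lemma mem_step_22 : (2 : Fin 4) ∈ exNBW.step 2 (exMC.label 2) := by simp [exNBW, exMC]

/-- Weight of the replicate-(1,1) path for any strategy is at most 1 and the
first-step structure. -/
lemma w_run1_le (μ : pM.Strategy) (n : ℕ) :
    pM.pathWeightAux μ [] (0, 0) (prefList run1 n) ≤
      (if n ≤ 1 then 1 else μ.act [] (0, 0) ((), 1) * (1/3)) := by
  cases n with
  | zero => simp [prefList]
  | succ m =>
    rw [pref_run1]
    cases m with
    | zero =>
      rw [List.replicate_zero, pwa_single]
      simp [PMF.coe_le_one]
    | succ k =>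
      rw [List.replicate_succ, pwa_cons_cons', pM_prob]
      rw [if_pos mem_step_01, basePMF_zero, Option.elim_some]
      have hmap : (exPMF.map (fun s' => (s', (1 : Fin 4)))) (1, 1) = 1/3 := by
        rw [map_pair_apply, if_pos rfl]
        simp [exPMF]
      rw [hmap]
      have hrest : ∀ j h', pM.pathWeightAux μ h' (1, 1)
          (List.replicate (j+1) (((1, 1) : Fin 3 × Fin 4), ((), (1 : Fin 4)))) ≤ 1 := by
        intro j
        induction j with
        | zero =>
          intro h'
          rw [List.replicate_succ, List.replicate_zero, pwa_single]
          exact PMF.coe_le_one _ _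
        | succ i ih =>
          intro h'
          rw [List.replicate_succ, List.replicate_succ, pwa_cons_cons', ← List.replicate_succ,
            pM_prob, if_pos mem_step_11, basePMF_one, Option.elim_some]
          have hmap1 : ((PMF.pure (1 : Fin 3)).map (fun s' => (s', (1 : Fin 4)))) (1, 1) = 1 := by
            rw [map_pair_apply, if_pos rfl, PMF.pure_apply, if_pos rfl]
          rw [hmap1, one_mul]
          calc μ.act h' (1,1) ((),1) * pM.pathWeightAux μ (h' ++ [((1, 1), ((), 1))]) (1, 1)
                (List.replicate (i+1) (((1, 1) : Fin 3 × Fin 4), ((), (1 : Fin 4))))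
              ≤ 1 * 1 := mul_le_mul' (PMF.coe_le_one _ _) (ih _)
            _ = 1 := one_mul 1
      rw [if_neg (by omega)]
      refine mul_le_mul' (le_refl _) ?_
      calc (1/3 : ℝ≥0∞) * pM.pathWeightAux μ ([] ++ [((0, 0), ((), 1))]) (1, 1)
            (List.replicate (k+1) (((1, 1) : Fin 3 × Fin 4), ((), (1 : Fin 4))))
          ≤ (1/3) * 1 := mul_le_mul' (le_refl _) (hrest k _)
        _ = 1/3 := mul_one _

lemma w_run2_le (μ : pM.Strategy) (n : ℕ) :
    pM.pathWeightAux μ [] (0, 0) (prefList run2 n) ≤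
      (if n ≤ 1 then 1 else μ.act [] (0, 0) ((), 2) * (2/3)) := by
  cases n with
  | zero => simp [prefList]
  | succ m =>
    rw [pref_run2]
    cases m with
    | zero =>
      rw [List.replicate_zero, pwa_single]
      simp [PMF.coe_le_one]
    | succ k =>
      rw [List.replicate_succ, pwa_cons_cons', pM_prob]
      rw [if_pos mem_step_02, basePMF_zero, Option.elim_some]
      have hmap : (exPMF.map (fun s' => (s', (2 : Fin 4)))) (2, 2) = 2/3 := by
        rw [map_pair_apply, if_pos rfl]
        simp [exPMF]
      rw [hmap]
      have hrest : ∀ j h', pM.pathWeightAux μ h' (2, 2)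
          (List.replicate (j+1) (((2, 2) : Fin 3 × Fin 4), ((), (2 : Fin 4)))) ≤ 1 := by
        intro j
        induction j with
        | zero =>
          intro h'
          rw [List.replicate_succ, List.replicate_zero, pwa_single]
          exact PMF.coe_le_one _ _
        | succ i ih =>
          intro h'
          rw [List.replicate_succ, List.replicate_succ, pwa_cons_cons', ← List.replicate_succ,
            pM_prob, if_pos mem_step_22, basePMF_two, Option.elim_some]
          have hmap1 : ((PMF.pure (2 : Fin 3)).map (fun s' => (s', (2 : Fin 4)))) (2, 2) = 1 := by
            rw [map_pair_apply, if_pos rfl, PMF.pure_apply, if_pos rfl]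
          rw [hmap1, one_mul]
          calc μ.act h' (2,2) ((),2) * pM.pathWeightAux μ (h' ++ [((2, 2), ((), 2))]) (2, 2)
                (List.replicate (i+1) (((2, 2) : Fin 3 × Fin 4), ((), (2 : Fin 4))))
              ≤ 1 * 1 := mul_le_mul' (PMF.coe_le_one _ _) (ih _)
            _ = 1 := one_mul 1
      rw [if_neg (by omega)]
      refine mul_le_mul' (le_refl _) ?_
      calc (2/3 : ℝ≥0∞) * pM.pathWeightAux μ ([] ++ [((0, 0), ((), 2))]) (2, 2)
            (List.replicate (k+1) (((2, 2) : Fin 3 × Fin 4), ((), (2 : Fin 4))))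
          ≤ (2/3) * 1 := mul_le_mul' (le_refl _) (hrest k _)
        _ = 2/3 := mul_one _

end Concrete
section PSynProof

/-- The Büchi event in the product. -/
def accE : Set (ℕ → (Fin 3 × Fin 4) × (Unit × Fin 4)) :=
  {r | ∀ n, ∃ m, n ≤ m ∧ (r m).1.2 ∈ exNBW.acc}

lemma prefList_one {X : Type*} (r : ℕ → X) : prefList r 1 = [r 0] := by
  simp [prefList, List.ofFn_succ]

lemma prefList_two {X : Type*} (r : ℕ → X) : prefList r 2 = [r 0, r 1] := by
  simp [prefList, List.ofFn_succ]

lemma prefList_add_two {X : Type*} (r : ℕ → X) (i : ℕ) :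
    prefList r (i + 2) = prefList r i ++ [r i, r (i + 1)] := by
  show List.ofFn _ = List.ofFn _ ++ _
  rw [List.ofFn_add]
  congr 1
  all_goals simp [List.ofFn_succ, Fin.natAdd]

lemma ennreal_13_le_23 : (1/3 : ℝ≥0∞) ≤ 2/3 := by
  gcongr
  all_goals norm_num

lemma ennreal_23_le_one : (2/3 : ℝ≥0∞) ≤ 1 := by
  rw [ENNReal.div_le_iff (by norm_num) (by norm_num)]
  all_goals norm_num

lemma posStep_elim {x y : (Fin 3 × Fin 4) × (Unit × Fin 4)}
    (h : PosStep pM x.1 x.2 y.1) :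
    y.1.2 = x.2.2 ∧ basePMF x.1.1 y.1.1 ≠ 0 := by
  obtain ⟨pp, hpp, hval⟩ := h
  rw [pM_prob] at hpp
  by_cases hm : x.2.2 ∈ exNBW.step x.1.2 (exMC.label x.1.1)
  · rw [if_pos hm] at hpp
    injection hpp with hpp'
    subst hpp'
    rw [map_pair_apply] at hval
    by_cases h2 : y.1.2 = x.2.2
    · rw [if_pos h2] at hval
      exact ⟨h2, hval⟩
    · rw [if_neg h2] at hval
      exact absurd rfl hval
  · rw [if_neg hm] at hpp
    exact absurd hpp (by simp)

lemma exPMF_ne0 {t : Fin 3} (h : exPMF t ≠ 0) : t = 1 ∨ t = 2 := by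
  fin_cases t
  · exact absurd (by simp [exPMF]) h
  · exact Or.inl rfl
  · exact Or.inr rfl

lemma pure_ne0 {x t : Fin 3} (h : PMF.pure x t ≠ 0) : t = x := by
  by_contra hc
  exact h (by simp [PMF.pure_apply, hc])

/-- Upper bound for the syntactic probability, for an arbitrary strategy. -/
lemma psyn_upper (μ : pM.Strategy) :
    pM.Pr μ ((0 : Fin 3), (0 : Fin 4)) accE ≤ 2/3 := by
  classical
  set C1 : Set (ℕ → (Fin 3 × Fin 4) × (Unit × Fin 4)) :=
    {r' | prefList r' 2 = prefList run1 2} with hC1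
  set C2 : Set (ℕ → (Fin 3 × Fin 4) × (Unit × Fin 4)) :=
    {r' | prefList r' 2 = prefList run2 2} with hC2
  set D : ℕ → Set (ℕ → (Fin 3 × Fin 4) × (Unit × Fin 4)) :=
    fun n => {r | ¬ ValidFrom pM ((0 : Fin 3), (0 : Fin 4)) (prefList r n)} with hD
  set g : ℕ → Set (ℕ → (Fin 3 × Fin 4) × (Unit × Fin 4)) :=
    fun i => match i with
      | 0 => C1
      | 1 => C2
      | (n+2) => D n with hg
  -- the cover
  have hcov : accE ⊆ ⋃ i, g i := by
    intro r hr
    by_cases hv : ∀ n, ValidFrom pM ((0 : Fin 3), (0 : Fin 4)) (prefList r n)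
    · -- structurally valid run: it must be run1 or run2 on its first two steps
      have win : ∀ i, ValidFrom pM (r i).1 [r i, r (i + 1)] := by
        intro i
        have h2 := hv (i + 2)
        rw [prefList_add_two] at h2
        exact vf_suffix (prefList r i) h2
      have en : ∀ i, (r i).2.2 ∈ exNBW.step (r i).1.2 (exMC.label (r i).1.1) := by
        intro i
        exact (pM_enabled _ _ _ _).mp (vf_en (win i))
      have pos : ∀ i, (r (i+1)).1.2 = (r i).2.2 ∧ basePMF (r i).1.1 (r (i+1)).1.1 ≠ 0 := by
        intro i
        exact posStep_elim (vf_tail (win i)).1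
      have h01 : (r 0).1 = ((0 : Fin 3), (0 : Fin 4)) := by
        have h1 := hv 1
        rw [prefList_one] at h1
        exact vf_head h1
      have hs0 : (r 0).1.1 = 0 := by rw [h01]
      have hq0 : (r 0).1.2 = 0 := by rw [h01]
      -- q-component 3 is absorbing
      have habs : ∀ i m, i ≤ m → (r i).1.2 = 3 → (r m).1.2 = 3 := by
        intro i m him h3
        induction m with
        | zero =>
          have : i = 0 := by omega
          subst this; exact h3
        | succ k ih =>
          rcases Nat.lt_or_ge i (k+1) with hlt | hge
          · have hk : (r k).1.2 = 3 := ih (by omega)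
            have henk := en k
            rw [hk, step3] at henk
            have : (r k).2.2 = 3 := henk
            rw [(pos k).1, this]
          · have : i = k + 1 := by omega
            subst this; exact h3
      obtain ⟨m, hm2, hmacc⟩ := hr 2
      have hmacc' : (r m).1.2 = 1 ∨ (r m).1.2 = 2 := by
        simpa [exNBW] using hmacc
      have hno3 : ∀ i, i ≤ m → (r i).1.2 ≠ 3 := by
        intro i him h3
        have := habs i m him h3
        rcases hmacc' with h | h <;> rw [this] at h <;> exact absurd h (by decide)
      -- first action
      have hen0 := en 0
      rw [hq0, hs0] at hen0
      have hlab0 : exMC.label 0 = true := rfl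
      rw [hlab0] at hen0
      have hc : (r 0).2.2 = 1 ∨ (r 0).2.2 = 2 := by
        simpa [exNBW] using hen0
      have hq1 : (r 1).1.2 = (r 0).2.2 := (pos 0).1
      have hs1 : (r 1).1.1 = 1 ∨ (r 1).1.1 = 2 := by
        have := (pos 0).2
        rw [hs0, basePMF_zero] at this
        exact exPMF_ne0 this
      rcases hc with hc | hc
      · -- chose q' = 1
        rcases hs1 with hs1 | hs1
        · -- at (s₁, 1): this is run1
          have hq1' : (r 1).1.2 = 1 := by rw [hq1, hc]
          have hen1 := en 1
          rw [hq1', hs1] at hen1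
          have hlab1 : exMC.label 1 = true := rfl
          rw [hlab1] at hen1
          have hc1 : (r 1).2.2 = 1 := by
            simpa [exNBW] using hen1
          refine Set.mem_iUnion.mpr ⟨0, ?_⟩
          show prefList r 2 = prefList run1 2
          rw [prefList_two, prefList_two]
          have e0 : r 0 = (((0 : Fin 3), (0 : Fin 4)), ((), (1 : Fin 4))) := by
            rw [show r 0 = ((r 0).1, ((), (r 0).2.2)) from rfl, h01, hc]
          have e1 : r 1 = (((1 : Fin 3), (1 : Fin 4)), ((), (1 : Fin 4))) := by
            rw [show r 1 = (((r 1).1.1, (r 1).1.2), ((), (r 1).2.2)) from rfl, hs1, hq1', hc1]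
          rw [e0, e1]
          rfl
        · -- at (s₂, 1): next q is 3, contradiction
          exfalso
          have hq1' : (r 1).1.2 = 1 := by rw [hq1, hc]
          have hen1 := en 1
          rw [hq1', hs1] at hen1
          have hlab2 : exMC.label 2 = false := rfl
          rw [hlab2] at hen1
          have hc1 : (r 1).2.2 = 3 := by
            simpa [exNBW] using hen1
          have : (r 2).1.2 = 3 := by rw [(pos 1).1, hc1]
          exact hno3 2 hm2 this
      · -- chose q' = 2
        rcases hs1 with hs1 | hs1
        · exfalso
          have hq1' : (r 1).1.2 = 2 := by rw [hq1, hc]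
          have hen1 := en 1
          rw [hq1', hs1] at hen1
          have hlab1 : exMC.label 1 = true := rfl
          rw [hlab1] at hen1
          have hc1 : (r 1).2.2 = 3 := by
            simpa [exNBW] using hen1
          have : (r 2).1.2 = 3 := by rw [(pos 1).1, hc1]
          exact hno3 2 hm2 this
        · have hq1' : (r 1).1.2 = 2 := by rw [hq1, hc]
          have hen1 := en 1
          rw [hq1', hs1] at hen1
          have hlab2 : exMC.label 2 = false := rfl
          rw [hlab2] at hen1
          have hc1 : (r 1).2.2 = 2 := by
            simpa [exNBW] using hen1
          refine Set.mem_iUnion.mpr ⟨1, ?_⟩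
          show prefList r 2 = prefList run2 2
          rw [prefList_two, prefList_two]
          have e0 : r 0 = (((0 : Fin 3), (0 : Fin 4)), ((), (2 : Fin 4))) := by
            rw [show r 0 = ((r 0).1, ((), (r 0).2.2)) from rfl, h01, hc]
          have e1 : r 1 = (((2 : Fin 3), (2 : Fin 4)), ((), (2 : Fin 4))) := by
            rw [show r 1 = (((r 1).1.1, (r 1).1.2), ((), (r 1).2.2)) from rfl, hs1, hq1', hc1]
          rw [e0, e1]
          rfl
    · push_neg at hv
      obtain ⟨n, hn⟩ := hv
      exact Set.mem_iUnion.mpr ⟨n + 2, hn⟩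
  -- preMeasure of the bad cylinders is zero
  have hDzero : ∀ n, pM.preMeasure μ ((0 : Fin 3), (0 : Fin 4)) (D n) = 0 := by
    intro n
    refine le_antisymm ?_ (zero_le)
    have hcyl : MDP.IsCylinderAt (D n) n := by
      intro a b hab ha
      show ¬ ValidFrom pM _ (prefList b n)
      rw [← hab]
      exact ha
    refine le_trans (preMeasure_le_horizon pM μ _ n (D n) hcyl) (le_of_eq ?_)
    rw [MDP.horizonProb]
    refine Finset.sum_eq_zero fun v _ => ?_
    split_ifs with hvv
    · obtain ⟨r', hr'D, hpre⟩ := hvv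
      by_contra hw
      exact hr'D (by rw [show prefList r' n = List.ofFn v from hpre]; exact
        pwa_ne_zero_valid pM pM_nonblocking μ _ _ _ hw)
    · rfl
  -- bound the cover sum
  refine le_trans (Pr_le_cover pM μ _ accE g hcov) ?_
  have htsum : ∑' i, pM.preMeasure μ ((0 : Fin 3), (0 : Fin 4)) (g i) =
      pM.preMeasure μ ((0 : Fin 3), (0 : Fin 4)) C1 +
      pM.preMeasure μ ((0 : Fin 3), (0 : Fin 4)) C2 := by
    rw [tsum_eq_sum (s := ({0, 1} : Finset ℕ)) ?_]
    · rw [Finset.sum_pair (by norm_num)]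
    · intro i hi
      have : 2 ≤ i := by
        simp only [Finset.mem_insert, Finset.mem_singleton] at hi
        omega
      obtain ⟨j, rfl⟩ : ∃ j, i = j + 2 := ⟨i - 2, by omega⟩
      exact hDzero j
  rw [htsum]
  have hb1 : pM.preMeasure μ ((0 : Fin 3), (0 : Fin 4)) C1 ≤
      μ.act [] ((0 : Fin 3), (0 : Fin 4)) ((), 1) * (1/3) := by
    refine le_trans (preMeasure_le_horizon pM μ _ 2 C1 (isCylinder_prefCyl run1 2)) ?_
    refine le_trans (horizon_prefCyl_le pM μ _ 2 run1) ?_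
    have := w_run1_le μ 2
    rwa [if_neg (by omega)] at this
  have hb2 : pM.preMeasure μ ((0 : Fin 3), (0 : Fin 4)) C2 ≤
      μ.act [] ((0 : Fin 3), (0 : Fin 4)) ((), 2) * (2/3) := by
    refine le_trans (preMeasure_le_horizon pM μ _ 2 C2 (isCylinder_prefCyl run2 2)) ?_
    refine le_trans (horizon_prefCyl_le pM μ _ 2 run2) ?_
    have := w_run2_le μ 2
    rwa [if_neg (by omega)] at this
  refine le_trans (add_le_add hb1 hb2) ?_
  calc μ.act [] ((0 : Fin 3), (0 : Fin 4)) ((), 1) * (1/3) +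
        μ.act [] ((0 : Fin 3), (0 : Fin 4)) ((), 2) * (2/3)
      ≤ μ.act [] ((0 : Fin 3), (0 : Fin 4)) ((), 1) * (2/3) +
        μ.act [] ((0 : Fin 3), (0 : Fin 4)) ((), 2) * (2/3) :=
        add_le_add (mul_le_mul' le_rfl ennreal_13_le_23) le_rfl
    _ = (μ.act [] ((0 : Fin 3), (0 : Fin 4)) ((), 1) +
        μ.act [] ((0 : Fin 3), (0 : Fin 4)) ((), 2)) * (2/3) := (add_mul _ _ _).symm
    _ ≤ 1 * (2/3) := mul_le_mul' (act_two_le _) le_rfl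
    _ = 2/3 := one_mul _

end PSynProof
section PSynLower

/-- Deterministic action choice preferring the Büchi state `q₂ = 2`. -/
noncomputable def pick : Fin 3 × Fin 4 → Unit × Fin 4 := fun sq =>
  ((), if (2 : Fin 4) ∈ exNBW.step sq.2 (exMC.label sq.1) then 2
       else if (1 : Fin 4) ∈ exNBW.step sq.2 (exMC.label sq.1) then 1 else 3)

lemma pick_enabled (sq : Fin 3 × Fin 4) : pM.enabled sq (pick sq) := by
  obtain ⟨s, q⟩ := sq
  rw [pick]
  by_cases h2 : (2 : Fin 4) ∈ exNBW.step q (exMC.label s)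
  · simp only [if_pos h2]
    exact (pM_enabled s q () 2).mpr h2
  · simp only [if_neg h2]
    by_cases h1 : (1 : Fin 4) ∈ exNBW.step q (exMC.label s)
    · simp only [if_pos h1]
      exact (pM_enabled s q () 1).mpr h1
    · simp only [if_neg h1]
      refine (pM_enabled s q () 3).mpr ?_
      revert h1 h2
      generalize exMC.label s = σ
      simp only [exNBW]
      split_ifs <;> intro h2 h1 <;> simp_all

lemma pick_00 : pick ((0 : Fin 3), (0 : Fin 4)) = ((), 2) := by
  rw [pick]
  simp only [if_pos mem_step_02]

lemma pick_22 : pick ((2 : Fin 3), (2 : Fin 4)) = ((), 2) := by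
  rw [pick]
  simp only [if_pos mem_step_22]

/-- The optimal strategy for the product. -/
noncomputable def nuStrat : pM.Strategy where
  act := fun _ sq => PMF.pure (pick sq)
  supp := by
    intro h s _ a ha
    rw [PMF.support_pure, Set.mem_singleton_iff] at ha
    rw [ha]
    exact pick_enabled s

lemma nu_act_00 : nuStrat.act [] ((0 : Fin 3), (0 : Fin 4)) ((), 2) = 1 := by
  show (PMF.pure (pick ((0 : Fin 3), (0 : Fin 4)))) ((), 2) = 1
  rw [pick_00, PMF.pure_apply, if_pos rfl]

lemma nu_act_22 (h : List ((Fin 3 × Fin 4) × (Unit × Fin 4))) :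
    nuStrat.act h ((2 : Fin 3), (2 : Fin 4)) ((), 2) = 1 := by
  show (PMF.pure (pick ((2 : Fin 3), (2 : Fin 4)))) ((), 2) = 1
  rw [pick_22, PMF.pure_apply, if_pos rfl]

lemma w_rep2_nu : ∀ (k : ℕ) (h' : List ((Fin 3 × Fin 4) × (Unit × Fin 4))),
    pM.pathWeightAux nuStrat h' (2, 2)
      (List.replicate (k + 1) (((2, 2) : Fin 3 × Fin 4), ((), (2 : Fin 4)))) = 1 := by
  intro k
  induction k with
  | zero =>
    intro h'
    rw [List.replicate_succ, List.replicate_zero, pwa_single, nu_act_22]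
  | succ i ih =>
    intro h'
    rw [List.replicate_succ, List.replicate_succ, pwa_cons_cons', ← List.replicate_succ,
      pM_prob, if_pos mem_step_22, basePMF_two, Option.elim_some]
    have hmap1 : ((PMF.pure (2 : Fin 3)).map (fun s' => (s', (2 : Fin 4)))) (2, 2) = 1 := by
      rw [map_pair_apply, if_pos rfl, PMF.pure_apply, if_pos rfl]
    rw [hmap1, one_mul, nu_act_22, one_mul, ih]

lemma w_run2_nu (n : ℕ) :
    (2/3 : ℝ≥0∞) ≤ pM.pathWeightAux nuStrat [] (0, 0) (prefList run2 n) := by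
  cases n with
  | zero =>
    rw [show prefList run2 0 = [] from rfl, pwa_nil]
    exact ennreal_23_le_one
  | succ m =>
    rw [pref_run2]
    cases m with
    | zero =>
      rw [List.replicate_zero, pwa_single, nu_act_00]
      exact ennreal_23_le_one
    | succ k =>
      rw [List.replicate_succ, pwa_cons_cons', pM_prob, if_pos mem_step_02, basePMF_zero,
        Option.elim_some]
      have hmap : (exPMF.map (fun s' => (s', (2 : Fin 4)))) (2, 2) = 2/3 := by
        rw [map_pair_apply, if_pos rfl]
        simp [exPMF]
      rw [hmap, nu_act_00, one_mul, ← List.replicate_succ, w_rep2_nu, mul_one]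

lemma run2_mem_accE : run2 ∈ accE := by
  intro n
  refine ⟨n + 1, by omega, ?_⟩
  show (run2 (n + 1)).1.2 ∈ exNBW.acc
  simp [run2, exNBW]

lemma psyn_lower :
    (2/3 : ℝ≥0∞) ≤ pM.Pr nuStrat ((0 : Fin 3), (0 : Fin 4)) accE := by
  refine le_Pr pM nuStrat _ _ accE fun g hcov => ?_
  obtain ⟨i, hi⟩ := Set.mem_iUnion.mp (hcov run2_mem_accE)
  refine le_trans ?_ (ENNReal.le_tsum i)
  refine le_preMeasure pM nuStrat _ _ (g i) fun n hcyl => ?_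
  exact le_trans (w_run2_nu n) (single_le_horizon pM nuStrat _ n (g i) run2 hi)

lemma psyn_eq : PSyn exNBW exMC 0 = 2/3 := by
  refine le_antisymm ?_ ?_
  · exact iSup_le fun μ => psyn_upper μ
  · exact le_iSup_of_le nuStrat psyn_lower

end PSynLower
section PSemProof

/-- The semantic event for `exMC`. -/
def semE : Set (ℕ → Fin 3 × Unit) :=
  {r | (fun n => exMC.label (r n).1) ∈ exNBW.lang}

/-- The unique strategy of the Markov chain. -/
noncomputable def mcStrat : exMC.Strategy where
  act := fun _ _ => PMF.pure ()
  supp := by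
    intro h s _ a _
    show (exMC.prob s a).isSome
    rfl

lemma mc_act (h : List (Fin 3 × Unit)) (s : Fin 3) (a : Unit) :
    mcStrat.act h s a = 1 := by
  show (PMF.pure () : PMF Unit) a = 1
  rw [PMF.pure_apply, if_pos rfl]

def path1 : ℕ → Fin 3 × Unit := fun n => (if n = 0 then 0 else 1, ())
def path2 : ℕ → Fin 3 × Unit := fun n => (if n = 0 then 0 else 2, ())

lemma path1_mem : path1 ∈ semE := by
  show (fun n => exMC.label (path1 n).1) ∈ exNBW.lang
  rw [exNBW_lang]
  left
  funext n
  cases n with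
  | zero => rfl
  | succ k => rfl

lemma path2_mem : path2 ∈ semE := by
  show (fun n => exMC.label (path2 n).1) ∈ exNBW.lang
  rw [exNBW_lang]
  right
  funext n
  cases n with
  | zero => rfl
  | succ k => rfl

lemma pref_path1 (n : ℕ) :
    prefList path1 (n + 1) = ((0 : Fin 3), ()) :: List.replicate n (((1 : Fin 3), ())) := by
  rw [prefList, List.ofFn_succ]
  congr 1
  have : (fun i : Fin n => path1 (i.succ : ℕ)) = fun _ : Fin n => ((1 : Fin 3), ()) := by
    funext i
    simp [path1, Fin.val_succ]
  rw [this, List.ofFn_const]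

lemma pref_path2 (n : ℕ) :
    prefList path2 (n + 1) = ((0 : Fin 3), ()) :: List.replicate n (((2 : Fin 3), ())) := by
  rw [prefList, List.ofFn_succ]
  congr 1
  have : (fun i : Fin n => path2 (i.succ : ℕ)) = fun _ : Fin n => ((2 : Fin 3), ()) := by
    funext i
    simp [path2, Fin.val_succ]
  rw [this, List.ofFn_const]

lemma w_rep_mc (x : Fin 3) (hx : basePMF x x = 1) :
    ∀ (k : ℕ) (h' : List (Fin 3 × Unit)),
      exMC.pathWeightAux mcStrat h' x (List.replicate (k + 1) ((x, ()))) = 1 := by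
  intro k
  induction k with
  | zero =>
    intro h'
    rw [List.replicate_succ, List.replicate_zero, pwa_single, mc_act]
  | succ i ih =>
    intro h'
    rw [List.replicate_succ, List.replicate_succ, pwa_cons_cons', ← List.replicate_succ,
      exMC_prob, Option.elim_some, hx, mc_act, one_mul, one_mul, ih]

lemma basePMF_1_1 : basePMF 1 1 = 1 := by
  rw [basePMF_one, PMF.pure_apply, if_pos rfl]

lemma basePMF_2_2 : basePMF 2 2 = 1 := by
  rw [basePMF_two, PMF.pure_apply, if_pos rfl]

lemma w_path1 (n : ℕ) :
    exMC.pathWeightAux mcStrat [] 0 (prefList path1 n) = if n ≤ 1 then 1 else 1/3 := by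
  cases n with
  | zero => rw [if_pos (by omega)]; rfl
  | succ m =>
    rw [pref_path1]
    cases m with
    | zero =>
      rw [if_pos (by omega), List.replicate_zero, pwa_single, mc_act]
    | succ k =>
      rw [if_neg (by omega), List.replicate_succ, pwa_cons_cons', exMC_prob, Option.elim_some,
        basePMF_zero, mc_act, one_mul, ← List.replicate_succ, w_rep_mc 1 basePMF_1_1, mul_one]
      simp [exPMF]

lemma w_path2 (n : ℕ) :
    exMC.pathWeightAux mcStrat [] 0 (prefList path2 n) = if n ≤ 1 then 1 else 2/3 := by
  cases n with
  | zero => rw [if_pos (by omega)]; rfl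
  | succ m =>
    rw [pref_path2]
    cases m with
    | zero =>
      rw [if_pos (by omega), List.replicate_zero, pwa_single, mc_act]
    | succ k =>
      rw [if_neg (by omega), List.replicate_succ, pwa_cons_cons', exMC_prob, Option.elim_some,
        basePMF_zero, mc_act, one_mul, ← List.replicate_succ, w_rep_mc 2 basePMF_2_2, mul_one]
      simp [exPMF]

lemma third_add_23 : (1/3 : ℝ≥0∞) + 2/3 = 1 := by
  have h12 : (1 : ℝ≥0∞) + 2 = 3 := by norm_num
  rw [ENNReal.div_add_div_same, h12]
  exact ENNReal.div_self (by norm_num) (by norm_num)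

lemma ennreal_13_le_one : (1/3 : ℝ≥0∞) ≤ 1 :=
  le_trans ennreal_13_le_23 ennreal_23_le_one

lemma two_le_horizon {S A L : Type*} [Fintype S] [Fintype A] (M : MDP S A L)
    (μ : M.Strategy) (s₀ : S) (n : ℕ) (E : Set (ℕ → S × A)) (r r' : ℕ → S × A)
    (hr : r ∈ E) (hr' : r' ∈ E)
    (hne : (fun i : Fin n => r i) ≠ (fun i : Fin n => r' i)) :
    M.pathWeightAux μ [] s₀ (prefList r n) + M.pathWeightAux μ [] s₀ (prefList r' n) ≤
      M.horizonProb μ s₀ n E := by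
  rw [MDP.horizonProb]
  have h1 : (if ∃ u ∈ E, prefList u n = List.ofFn (fun i : Fin n => r i) then
      M.pathWeightAux μ [] s₀ (List.ofFn (fun i : Fin n => r i)) else 0) =
      M.pathWeightAux μ [] s₀ (prefList r n) := by
    rw [if_pos ⟨r, hr, rfl⟩]; rfl
  have h2 : (if ∃ u ∈ E, prefList u n = List.ofFn (fun i : Fin n => r' i) then
      M.pathWeightAux μ [] s₀ (List.ofFn (fun i : Fin n => r' i)) else 0) =
      M.pathWeightAux μ [] s₀ (prefList r' n) := by
    rw [if_pos ⟨r', hr', rfl⟩]; rfl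
  calc M.pathWeightAux μ [] s₀ (prefList r n) + M.pathWeightAux μ [] s₀ (prefList r' n)
      = ∑ v ∈ ({fun i : Fin n => r i, fun i : Fin n => r' i} : Finset (Fin n → S × A)),
        (if ∃ u ∈ E, prefList u n = List.ofFn v then
          M.pathWeightAux μ [] s₀ (List.ofFn v) else 0) := by
        rw [Finset.sum_pair hne, h1, h2]
    _ ≤ _ := Finset.sum_le_sum_of_subset (Finset.subset_univ _)

lemma psem_lower : (1 : ℝ≥0∞) ≤ exMC.Pr mcStrat 0 semE := by
  refine le_Pr exMC mcStrat 0 1 semE fun g hcov => ?_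
  by_cases hsame : ∃ i, path1 ∈ g i ∧ path2 ∈ g i
  · obtain ⟨i, h1, h2⟩ := hsame
    refine le_trans ?_ (ENNReal.le_tsum i)
    refine le_preMeasure exMC mcStrat 0 1 (g i) fun n hcyl => ?_
    by_cases hn : n ≤ 1
    · refine le_trans ?_ (single_le_horizon exMC mcStrat 0 n (g i) path1 h1)
      rw [w_path1, if_pos hn]
    · have hne : (fun i : Fin n => path1 i) ≠ (fun i : Fin n => path2 i) := by
        intro heq
        have := congrFun heq ⟨1, by omega⟩
        simp [path1, path2] at this
      refine le_trans ?_ (two_le_horizon exMC mcStrat 0 n (g i) path1 path2 h1 h2 hne)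
      rw [w_path1, w_path2, if_neg hn, if_neg hn, third_add_23]
  · push_neg at hsame
    obtain ⟨i, hi⟩ := Set.mem_iUnion.mp (hcov path1_mem)
    obtain ⟨j, hj⟩ := Set.mem_iUnion.mp (hcov path2_mem)
    have hij : i ≠ j := by
      intro h
      exact hsame i hi (h ▸ hj)
    have hmi : (1/3 : ℝ≥0∞) ≤ exMC.preMeasure mcStrat 0 (g i) := by
      refine le_preMeasure exMC mcStrat 0 _ (g i) fun n hcyl => ?_
      refine le_trans ?_ (single_le_horizon exMC mcStrat 0 n (g i) path1 hi)
      rw [w_path1]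
      split_ifs
      · exact ennreal_13_le_one
      · exact le_refl _
    have hmj : (2/3 : ℝ≥0∞) ≤ exMC.preMeasure mcStrat 0 (g j) := by
      refine le_preMeasure exMC mcStrat 0 _ (g j) fun n hcyl => ?_
      refine le_trans ?_ (single_le_horizon exMC mcStrat 0 n (g j) path2 hj)
      rw [w_path2]
      split_ifs
      · exact ennreal_23_le_one
      · exact le_refl _
    calc (1 : ℝ≥0∞) = 1/3 + 2/3 := third_add_23.symm
      _ ≤ exMC.preMeasure mcStrat 0 (g i) + exMC.preMeasure mcStrat 0 (g j) :=
          add_le_add hmi hmj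
      _ = ∑ k ∈ ({i, j} : Finset ℕ), exMC.preMeasure mcStrat 0 (g k) :=
          (Finset.sum_pair (f := fun k => exMC.preMeasure mcStrat 0 (g k)) hij).symm
      _ ≤ ∑' k, exMC.preMeasure mcStrat 0 (g k) := ENNReal.sum_le_tsum _

lemma psem_eq : PSem exNBW exMC 0 = 1 := by
  refine le_antisymm ?_ ?_
  · exact iSup_le fun μ => Pr_le_one exMC μ 0 _
  · exact le_iSup_of_le mcStrat psem_lower

end PSemProof
lemma exMC_nonblocking : exMC.NonBlocking := by
  intro s
  refine ⟨(), ?_⟩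
  show (exMC.prob s ()).isSome
  rfl

lemma two_thirds_ne_one : (2/3 : ℝ≥0∞) ≠ 1 := by
  intro h
  have h3 : (2 : ℝ≥0∞) = 3 := by
    have := congrArg (· * 3) h
    simpa [ENNReal.div_mul_cancel (by norm_num : (3:ℝ≥0∞) ≠ 0)
      (by norm_num : (3:ℝ≥0∞) ≠ ⊤)] using this
  norm_num at h3

/-- `L(N) = {a^ω, a b^ω}`, `PSem_N^M(s₀) = 1`, `PSyn_N^M(s₀) = 2/3`,
and consequently `N` is not GFM. -/
theorem exNBW_not_gfm :
    exNBW.lang = {(fun _ => true), wcons true (fun _ => false)} ∧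
    PSem exNBW exMC 0 = 1 ∧
    PSyn exNBW exMC 0 = 2/3 ∧
    ¬ exNBW.GFM := by
  refine ⟨exNBW_lang, psem_eq, psyn_eq, ?_⟩
  intro h
  have heq := h (Fin 3) Unit exMC exMC_nonblocking 0
  rw [psem_eq, psyn_eq] at heq
  exact two_thirds_ne_one heq
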